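/- (Goodman) If f is starlike on the unit disk (f analytic, f(0)=0, f'(0)=1, and Re(zf'(z)/f(z)) > 0 on 𝔻), then |Arg(f(z)/z)| ≤ 2 arcsin|z| < π for all z ∈ 𝔻, where Arg(f(z)/z) is the imaginary part of the branch of log(f(z)/z) vanishing at the origin. -/

import Mathlib

open Complex Metric

/-- Derivative of `t ↦ normSq (h t)`. -/
lemma hasDerivAt_normSq_comp {h : ℝ → ℂ} {d : ℂ} {t : ℝ} (hh : HasDerivAt h d t) :
    HasDerivAt (fun s => Complex.normSq (h s)) (2 * ((starRingEnd ℂ) (h t) * d).re) t := by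
  have hre : HasDerivAt (fun s => (h s).re) d.re t :=
    Complex.reCLM.hasFDerivAt.comp_hasDerivAt t hh
  have him : HasDerivAt (fun s => (h s).im) d.im t :=
    Complex.imCLM.hasFDerivAt.comp_hasDerivAt t hh
  have H := (hre.mul hre).add (him.mul him)
  have e : d.re * (h t).re + (h t).re * d.re + (d.im * (h t).im + (h t).im * d.im)
      = 2 * ((starRingEnd ℂ) (h t) * d).re := by
    simp [Complex.mul_re]; ring
  rw [e] at H
  simpa only [Complex.normSq_apply, Pi.add_def, Pi.mul_def] using H

/-- The imaginary part of `ζ` and `arg (exp ζ)` agree mod `2π`. -/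
lemma im_eq_arg_exp_add (ζ : ℂ) :
    ∃ n : ℤ, ζ.im = Complex.arg (Complex.exp ζ) + n * (2 * Real.pi) := by
  have h1 : Complex.exp ζ = Complex.exp (↑ζ.re) * Complex.exp (↑ζ.im * I) := by
    rw [← Complex.exp_add]
    congr 1
    exact (Complex.re_add_im ζ).symm
  have h2 : Complex.exp ζ
      = (Real.exp ζ.re : ℂ) * Complex.exp (↑(Complex.arg (Complex.exp ζ)) * I) := by
    conv_lhs => rw [← Complex.norm_mul_exp_arg_mul_I (Complex.exp ζ)]
    rw [Complex.norm_exp]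
  rw [Complex.ofReal_exp] at h2
  have h3 : Complex.exp (↑ζ.im * I) = Complex.exp (↑(Complex.arg (Complex.exp ζ)) * I) := by
    have hne : Complex.exp (↑ζ.re : ℂ) ≠ 0 := Complex.exp_ne_zero _
    have := h1.symm.trans h2
    exact mul_left_cancel₀ hne this
  obtain ⟨n, hn⟩ := Complex.exp_eq_exp_iff_exists_int.mp h3
  refine ⟨n, ?_⟩
  have := congrArg Complex.im hn
  simpa using this

/-- `|arg (1 - w)| ≤ arcsin |w|` for `|w| < 1`. -/
lemma abs_arg_one_sub_le {w : ℂ} (hw : ‖w‖ < 1) :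
    |Complex.arg (1 - w)| ≤ Real.arcsin (‖w‖) := by
  have hre : 0 < (1 - w).re := by
    have h1 : |w.re| ≤ ‖w‖ := Complex.abs_re_le_norm w
    have := abs_le.mp h1
    simp only [Complex.sub_re, Complex.one_re]
    linarith
  have hne : (1 - w) ≠ 0 := by
    intro h; rw [h] at hre; simp at hre
  have habs : 0 < ‖1 - w‖ := by
    exact norm_pos_iff.mpr hne
  have harg2 : |Complex.arg (1 - w)| ≤ Real.pi / 2 :=
    Complex.abs_arg_le_pi_div_two_iff.mpr hre.le
  have hsin0 : Real.sin (Complex.arg (1 - w)) = -w.im / ‖1 - w‖ := by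
    rw [Complex.sin_arg]; simp [Complex.sub_im]
  have hsin : Real.sin |Complex.arg (1 - w)| = |w.im| / ‖1 - w‖ := by
    rcases le_or_gt 0 (Complex.arg (1 - w)) with h | h
    · have hs : 0 ≤ Real.sin (Complex.arg (1 - w)) :=
        Real.sin_nonneg_of_nonneg_of_le_pi h (by
          have := abs_le.mp harg2; linarith [Real.pi_pos])
      have him : w.im ≤ 0 := by
        rw [hsin0] at hs
        by_contra hc
        push_neg at hc
        have : -w.im / ‖1 - w‖ < 0 := div_neg_of_neg_of_pos (by linarith) habs
        linarith
      rw [_root_.abs_of_nonneg h, hsin0, _root_.abs_of_nonpos him]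
    · have hs : Real.sin (Complex.arg (1 - w)) ≤ 0 :=
        Real.sin_nonpos_of_nonpos_of_neg_pi_le h.le (by
          have := abs_le.mp harg2; linarith [Real.pi_pos])
      have him : 0 ≤ w.im := by
        rw [hsin0] at hs
        by_contra hc
        push_neg at hc
        have : 0 < -w.im / ‖1 - w‖ := div_pos (by linarith) habs
        linarith
      rw [_root_.abs_of_neg h, Real.sin_neg, hsin0, _root_.abs_of_nonneg him]
      field_simp
  have hkey : |w.im| ≤ ‖w‖ * ‖1 - w‖ := by
    have hsq : w.im ^ 2 ≤ (‖w‖ * ‖1 - w‖) ^ 2 := by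
      rw [mul_pow, Complex.sq_norm, Complex.sq_norm]
      simp only [Complex.normSq_apply, Complex.sub_re, Complex.sub_im, Complex.one_re,
        Complex.one_im]
      nlinarith [sq_nonneg (w.re - (w.re * w.re + w.im * w.im)), sq_nonneg w.im]
    calc |w.im| = Real.sqrt (w.im ^ 2) := (Real.sqrt_sq_eq_abs _).symm
    _ ≤ Real.sqrt ((‖w‖ * ‖1 - w‖) ^ 2) := Real.sqrt_le_sqrt hsq
    _ = ‖w‖ * ‖1 - w‖ := by
        rw [Real.sqrt_sq (by positivity)]
  have hsinle : Real.sin |Complex.arg (1 - w)| ≤ ‖w‖ := by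
    rw [hsin, div_le_iff₀ habs]; exact hkey
  have h0 : 0 ≤ |Complex.arg (1 - w)| := abs_nonneg _
  calc |Complex.arg (1 - w)|
      = Real.arcsin (Real.sin |Complex.arg (1 - w)|) :=
        (Real.arcsin_sin (by linarith [Real.pi_pos]) harg2).symm
    _ ≤ Real.arcsin (‖w‖) := Real.monotone_arcsin hsinle

/-- Key step: `|1 - exp (-(L z)/2)| < 1` on the unit ball (Miller–Mocanu type argument). -/
lemma goodman_key (f L : ℂ → ℂ)
    (hf : DifferentiableOn ℂ f (ball (0 : ℂ) 1))
    (hfz : ∀ z ∈ ball (0 : ℂ) 1, z ≠ 0 → f z ≠ 0)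
    (hstar : ∀ z ∈ ball (0 : ℂ) 1, z ≠ 0 → 0 < (z * deriv f z / f z).re)
    (hL : DifferentiableOn ℂ L (ball (0 : ℂ) 1))
    (hL0 : L 0 = 0)
    (hLf : ∀ z ∈ ball (0 : ℂ) 1, z ≠ 0 → Complex.exp (L z) = f z / z) :
    ∀ z ∈ ball (0 : ℂ) 1, ‖1 - Complex.exp (-(L z) / 2)‖ < 1 := by
  set w : ℂ → ℂ := fun z => 1 - Complex.exp (-(L z) / 2) with hwdef
  have hw0 : w 0 = 0 := by simp [hwdef, hL0]
  have hwd : DifferentiableOn ℂ w (ball (0 : ℂ) 1) :=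
    (differentiableOn_const 1).sub ((hL.neg.div_const 2).cexp)
  -- derivative of w at interior points
  have hwD : ∀ z ∈ ball (0 : ℂ) 1,
      HasDerivAt w (deriv L z / 2 * Complex.exp (-(L z) / 2)) z := by
    intro z hz
    have hLd : HasDerivAt L (deriv L z) z :=
      (hL.differentiableAt (isOpen_ball.mem_nhds hz)).hasDerivAt
    have h1 : HasDerivAt (fun ζ => -(L ζ) / 2) (-(deriv L z) / 2) z := hLd.neg.div_const 2
    have h2 := h1.cexp
    have h3 := (hasDerivAt_const z (1 : ℂ)).sub h2
    exact h3.congr_deriv (by ring)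
  -- z * deriv L z = p z - 1
  have hzL : ∀ z ∈ ball (0 : ℂ) 1, z ≠ 0 →
      z * deriv L z = z * deriv f z / f z - 1 := by
    intro z hz hz0
    have hLd : HasDerivAt L (deriv L z) z :=
      (hL.differentiableAt (isOpen_ball.mem_nhds hz)).hasDerivAt
    have hfd : HasDerivAt f (deriv f z) z :=
      (hf.differentiableAt (isOpen_ball.mem_nhds hz)).hasDerivAt
    have hdiv : HasDerivAt (fun ζ => f ζ / ζ)
        ((deriv f z * z - f z * 1) / z ^ 2) z := hfd.div (hasDerivAt_id z) hz0
    have hexpL : HasDerivAt (fun ζ => Complex.exp (L ζ))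
        (Complex.exp (L z) * deriv L z) z := hLd.cexp
    have hopen : IsOpen (ball (0 : ℂ) 1 ∩ {ζ | ζ ≠ 0}) :=
      isOpen_ball.inter isOpen_ne
    have hEq : (fun ζ => Complex.exp (L ζ)) =ᶠ[nhds z] fun ζ => f ζ / ζ := by
      filter_upwards [hopen.mem_nhds ⟨hz, hz0⟩] with ζ hζ
      exact hLf ζ hζ.1 hζ.2
    have huniq := (hexpL.congr_of_eventuallyEq hEq.symm).unique hdiv
    rw [hLf z hz hz0] at huniq
    have hfne := hfz z hz hz0
    field_simp at huniq
    have h4 : f z * deriv L z * z = deriv f z * z - f z := by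
      apply mul_right_cancel₀ hz0
      linear_combination z * huniq
    field_simp
    linear_combination h4
  -- main claim by contradiction
  by_contra hcon
  push_neg at hcon
  obtain ⟨z₀, hz₀b, hz₀⟩ := hcon
  set r : ℝ := ‖z₀‖ with hrdef
  have hr1 : r < 1 := mem_ball_zero_iff.mp hz₀b
  set K : Set ℂ := closedBall (0 : ℂ) r ∩ {z | 1 ≤ ‖w z‖} with hKdef
  have hKsub : K ⊆ ball (0 : ℂ) 1 := fun z hzK =>
    mem_ball_zero_iff.mpr (lt_of_le_of_lt (mem_closedBall_zero_iff.mp hzK.1) hr1)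
  have hKclosed : IsClosed K := by
    apply ContinuousOn.preimage_isClosed_of_isClosed
      (hwd.continuousOn.norm.mono (fun z hz => mem_ball_zero_iff.mpr
        (lt_of_le_of_lt (mem_closedBall_zero_iff.mp hz) hr1)))
      isClosed_closedBall (isClosed_Ici (a := (1:ℝ)))
  have hKcompact : IsCompact K :=
    (isCompact_closedBall (0 : ℂ) r).of_isClosed_subset hKclosed Set.inter_subset_left
  have hKne : K.Nonempty := ⟨z₀, by
    refine ⟨mem_closedBall_zero_iff.mpr le_rfl, ?_⟩
    simpa using hz₀⟩
  obtain ⟨z₁, hz₁K, hmin⟩ := hKcompact.exists_isMinOn hKne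
    (continuous_norm.continuousOn)
  set ρ : ℝ := ‖z₁‖ with hρdef
  have hρr : ρ ≤ r := mem_closedBall_zero_iff.mp hz₁K.1
  have hρ1 : ρ < 1 := lt_of_le_of_lt hρr hr1
  have hz₁ball : z₁ ∈ ball (0 : ℂ) 1 := mem_ball_zero_iff.mpr hρ1
  have hwz₁ge : 1 ≤ ‖w z₁‖ := hz₁K.2
  have hρpos : 0 < ρ := by
    rcases eq_or_lt_of_le (norm_nonneg z₁) with h | h
    · exfalso
      have hz₁0 : z₁ = 0 := by
        have := h.symm
        rwa [norm_eq_zero] at this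
      rw [hz₁0, hw0] at hwz₁ge
      simp only [norm_zero] at hwz₁ge
      linarith
    · exact h
  have hz₁ne : z₁ ≠ 0 := by
    intro h; rw [h] at hρdef; simp [hρdef] at hρpos
  -- below radius ρ, |w| < 1
  have hlt : ∀ z : ℂ, ‖z‖ < ρ → ‖w z‖ < 1 := by
    intro z hz
    by_contra hc
    push_neg at hc
    have hzK : z ∈ K := ⟨mem_closedBall_zero_iff.mpr (le_of_lt (lt_of_lt_of_le hz hρr)), hc⟩
    have := hmin hzK
    exact absurd this (not_le.mpr hz)
  -- Schwarz lemma on ball of radius ρ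
  have hS : ∀ z : ℂ, ‖z‖ < ρ → ‖w z‖ ≤ ‖z‖ / ρ := by
    intro z hz
    have hmaps : Set.MapsTo w (ball (0 : ℂ) ρ) (closedBall (w 0) 1) := by
      intro ζ hζ
      rw [hw0]
      exact mem_closedBall_zero_iff.mpr (hlt ζ (mem_ball_zero_iff.mp hζ)).le
    have hdball : DifferentiableOn ℂ w (ball (0 : ℂ) ρ) :=
      hwd.mono (ball_subset_ball hρ1.le)
    have := Complex.dist_le_div_mul_dist_of_mapsTo_ball hdball hmaps
      (mem_ball_zero_iff.mpr hz)
    rw [hw0] at this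
    simpa [Complex.dist_eq, div_eq_inv_mul] using this
  -- on the circle of radius ρ, |w| ≤ 1
  have hcirc : ∀ z : ℂ, ‖z‖ = ρ → ‖w z‖ ≤ 1 := by
    intro z hz
    have hzn : ‖z‖ = ρ := hz
    have hzball : z ∈ ball (0 : ℂ) 1 := mem_ball_zero_iff.mpr (by rw [hzn]; exact hρ1)
    have hwc : ContinuousAt w z :=
      (hwd.differentiableAt (isOpen_ball.mem_nhds hzball)).continuousAt
    have htends : Filter.Tendsto (fun s : ℝ => ‖w ((s : ℂ) * z)‖)
        (nhdsWithin 1 (Set.Iio 1)) (nhds (‖w z‖)) := by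
      have hc : Continuous (fun s : ℝ => (s : ℂ) * z) :=
        Complex.continuous_ofReal.mul continuous_const
      have h1 : Filter.Tendsto (fun s : ℝ => (s : ℂ) * z)
          (nhdsWithin 1 (Set.Iio 1)) (nhds z) := by
        have := (hc.tendsto 1).mono_left (nhdsWithin_le_nhds (s := Set.Iio (1:ℝ)))
        simpa using this
      have h2 : Filter.Tendsto (fun s : ℝ => w ((s : ℂ) * z))
          (nhdsWithin 1 (Set.Iio 1)) (nhds (w z)) :=
        Filter.Tendsto.comp (g := w) hwc h1
      exact h2.norm
    refine le_of_tendsto htends ?_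
    filter_upwards [Ioo_mem_nhdsLT (zero_lt_one (α := ℝ))] with s hs
    have hsz : ‖(s : ℂ) * z‖ = s * ρ := by
      rw [norm_mul, Complex.norm_real, Real.norm_eq_abs, hz, _root_.abs_of_pos hs.1]
    have hlt2 : ‖(s : ℂ) * z‖ < ρ := by
      rw [hsz]
      nlinarith [hs.1, hs.2, hρpos]
    have := hS _ hlt2
    rw [hsz] at this
    calc ‖w ((s : ℂ) * z)‖ ≤ s * ρ / ρ := this
    _ = s := by field_simp
    _ ≤ 1 := hs.2.le
  have hwz₁ : ‖w z₁‖ = 1 := le_antisymm (hcirc z₁ rfl) hwz₁ge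
  -- derivative data at z₁
  set E₁ : ℂ := Complex.exp (-(L z₁) / 2) with hE₁def
  have hE₁ne : E₁ ≠ 0 := Complex.exp_ne_zero _
  set dw : ℂ := deriv L z₁ / 2 * E₁ with hdwdef
  have hwD₁ : HasDerivAt w dw z₁ := hwD z₁ hz₁ball
  set p₁ : ℂ := z₁ * deriv f z₁ / f z₁ with hp₁def
  have hp₁pos : 0 < p₁.re := hstar z₁ hz₁ball hz₁ne
  have hzdw : z₁ * dw = (p₁ - 1) * E₁ / 2 := by
    have h := hzL z₁ hz₁ball hz₁ne
    rw [hdwdef]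
    rw [hp₁def]
    linear_combination (E₁ / 2) * h
  set τ : ℂ := (starRingEnd ℂ) (w z₁) * (z₁ * dw) with hτdef
  -- tangential condition : τ.im = 0
  have hτim : τ.im = 0 := by
    have hc : HasDerivAt (fun ζ : ℂ => z₁ * Complex.exp (ζ * I)) (z₁ * I) 0 := by
      have h0 : HasDerivAt (fun ζ : ℂ => Complex.exp (ζ * I))
          (Complex.exp ((0 : ℂ) * I) * (1 * I)) 0 := ((hasDerivAt_id (0 : ℂ)).mul_const I).cexp
      have h1 := h0.const_mul z₁
      exact h1.congr_deriv (by simp)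
    have hpt : z₁ * Complex.exp ((0 : ℂ) * I) = z₁ := by simp
    have hw1 : HasDerivAt w dw (z₁ * Complex.exp ((0 : ℂ) * I)) := by
      rw [hpt]; exact hwD₁
    have hcomp : HasDerivAt (fun ζ : ℂ => w (z₁ * Complex.exp (ζ * I)))
        (dw * (z₁ * I)) 0 := by have := hw1.comp 0 hc; exact this
    have hcomp' : HasDerivAt (fun ζ : ℂ => w (z₁ * Complex.exp (ζ * I)))
        (dw * (z₁ * I)) (((0 : ℝ) : ℂ)) := by
      rw [Complex.ofReal_zero]; exact hcomp
    have hreal := hcomp'.comp_ofReal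
    have hF := hasDerivAt_normSq_comp hreal
    have hmax : IsLocalMax
        (fun t : ℝ => Complex.normSq (w (z₁ * Complex.exp ((t : ℂ) * I)))) 0 := by
      apply Filter.Eventually.of_forall
      intro t
      have habs : ‖z₁ * Complex.exp ((t : ℂ) * I)‖ = ρ := by
        rw [norm_mul, Complex.norm_exp_ofReal_mul_I, mul_one]
      have h1 := hcirc _ habs
      have h2 : Complex.normSq (w (z₁ * Complex.exp ((t : ℂ) * I))) ≤ 1 := by
        rw [Complex.normSq_eq_norm_sq]
        nlinarith [norm_nonneg (w (z₁ * Complex.exp ((t : ℂ) * I)))]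
      have h0 : Complex.normSq (w (z₁ * Complex.exp (((0 : ℝ) : ℂ) * I))) = 1 := by
        rw [Complex.ofReal_zero, hpt, Complex.normSq_eq_norm_sq, hwz₁]; norm_num
      simp only [h0]
      exact h2
    have hzero := hmax.hasDerivAt_eq_zero hF
    have hform : (starRingEnd ℂ) (w (z₁ * Complex.exp ((((0 : ℝ)) : ℂ) * I)))
        * (dw * (z₁ * I)) = τ * I := by
      rw [Complex.ofReal_zero, hpt, hτdef]; ring
    rw [hform, Complex.mul_I_re] at hzero
    linarith
  -- radial condition : 1 ≤ τ.re
  have hτre : 1 ≤ τ.re := by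
    have hid : HasDerivAt (fun ζ : ℂ => ζ * z₁) (1 * z₁) 1 := (hasDerivAt_id (1 : ℂ)).mul_const z₁
    have hw1 : HasDerivAt w dw ((1 : ℂ) * z₁) := by rw [one_mul]; exact hwD₁
    have hcomp : HasDerivAt (fun ζ : ℂ => w (ζ * z₁)) (dw * (1 * z₁)) 1 := by have := hw1.comp 1 hid; exact this
    have hcomp' : HasDerivAt (fun ζ : ℂ => w (ζ * z₁)) (dw * (1 * z₁)) (((1 : ℝ) : ℂ)) := by
      rw [Complex.ofReal_one]; exact hcomp
    have hreal := hcomp'.comp_ofReal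
    have hG := hasDerivAt_normSq_comp hreal
    have hval : 2 * ((starRingEnd ℂ) (w ((((1 : ℝ)) : ℂ) * z₁)) * (dw * (1 * z₁))).re
        = 2 * τ.re := by
      have h1 : (starRingEnd ℂ) (w ((((1 : ℝ)) : ℂ) * z₁)) * (dw * (1 * z₁)) = τ := by
        rw [Complex.ofReal_one, one_mul, hτdef]; ring
      rw [h1]
    rw [hval] at hG
    -- G t ≤ t ^ 2 on (0,1)
    have hGle : ∀ t : ℝ, t ∈ Set.Ioo (0 : ℝ) 1 →
        Complex.normSq (w ((t : ℂ) * z₁)) ≤ t ^ 2 := by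
      intro t ht
      have habs : ‖(t : ℂ) * z₁‖ = t * ρ := by
        rw [norm_mul, Complex.norm_real, Real.norm_eq_abs, _root_.abs_of_pos ht.1]
      have hlt2 : ‖(t : ℂ) * z₁‖ < ρ := by
        rw [habs]; nlinarith [ht.1, ht.2, hρpos]
      have := hS _ hlt2
      rw [habs] at this
      have h2 : ‖w ((t : ℂ) * z₁)‖ ≤ t := by
        calc ‖w ((t : ℂ) * z₁)‖ ≤ t * ρ / ρ := this
        _ = t := by field_simp
      rw [Complex.normSq_eq_norm_sq]
      nlinarith [norm_nonneg (w ((t : ℂ) * z₁))]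
    have hG1 : Complex.normSq (w (((1 : ℝ) : ℂ) * z₁)) = 1 := by
      rw [Complex.ofReal_one, one_mul, Complex.normSq_eq_norm_sq, hwz₁]; norm_num
    -- slope argument
    have hslope := hasDerivAt_iff_tendsto_slope.mp hG
    have hmono : nhdsWithin (1 : ℝ) (Set.Iio 1) ≤ nhdsWithin 1 {(1 : ℝ)}ᶜ :=
      nhdsWithin_mono 1 (fun x hx => ne_of_lt hx)
    have hs2 := hslope.mono_left hmono
    have hev : ∀ᶠ t in nhdsWithin (1 : ℝ) (Set.Iio 1),
        1 + t ≤ slope (fun t : ℝ => Complex.normSq (w ((t : ℂ) * z₁))) 1 t := by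
      filter_upwards [Ioo_mem_nhdsLT (zero_lt_one (α := ℝ))] with t ht
      have h1 := hGle t ht
      have hden : t - 1 < 0 := by linarith [ht.2]
      rw [slope_def_field, hG1]
      rw [le_div_iff_of_neg (by linarith [ht.2] : t - 1 < (0:ℝ))]
      nlinarith [h1]
    have htend2 : Filter.Tendsto (fun t : ℝ => 1 + t)
        (nhdsWithin (1 : ℝ) (Set.Iio 1)) (nhds 2) := by
      have h : Filter.Tendsto (fun t : ℝ => 1 + t) (nhds (1 : ℝ)) (nhds (1 + 1)) :=
        Filter.Tendsto.const_add 1 (Filter.tendsto_id (x := nhds (1 : ℝ)))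
      have h2 := h.mono_left (nhdsWithin_le_nhds (s := Set.Iio (1 : ℝ)))
      norm_num at h2
      exact h2
    have h2le : (2 : ℝ) ≤ 2 * τ.re := le_of_tendsto_of_tendsto htend2 hs2 hev
    linarith
  -- final contradiction
  have hu1 : Complex.normSq (w z₁) = 1 := by
    rw [Complex.normSq_eq_norm_sq, hwz₁]; norm_num
  have hE : (1 : ℂ) - w z₁ = E₁ := by simp [hwdef, hE₁def]
  have hune : w z₁ ≠ 1 := by
    intro h
    rw [h] at hE
    simp at hE
    exact hE₁ne hE.symm
  have hτeq : 2 * τ = (p₁ - 1) * ((starRingEnd ℂ) (w z₁) - 1) := by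
    have hcu : (starRingEnd ℂ) (w z₁) * E₁ = (starRingEnd ℂ) (w z₁) - 1 := by
      rw [← hE, mul_sub, mul_one, mul_comm ((starRingEnd ℂ) (w z₁)) (w z₁),
        Complex.mul_conj, hu1]
      norm_num
    calc 2 * τ = (p₁ - 1) * ((starRingEnd ℂ) (w z₁) * E₁) := by
          rw [hτdef, hzdw]; ring
    _ = (p₁ - 1) * ((starRingEnd ℂ) (w z₁) - 1) := by rw [hcu]
  have hconjτ : (starRingEnd ℂ) τ = τ := Complex.conj_eq_iff_im.mpr hτim
  have hτeq2 : 2 * τ = ((starRingEnd ℂ) p₁ - 1) * (w z₁ - 1) := by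
    have h := congrArg (starRingEnd ℂ) hτeq
    simpa [map_mul, map_sub, map_one, Complex.conj_conj, hconjτ, map_ofNat] using h
  have hMdef : (w z₁ - 1) * ((starRingEnd ℂ) (w z₁) - 1)
      = ((Complex.normSq (w z₁ - 1) : ℝ) : ℂ) := by
    rw [← Complex.mul_conj (w z₁ - 1)]
    congr 1
    simp [map_sub]
  have hu1C : w z₁ * (starRingEnd ℂ) (w z₁) = 1 := by
    rw [Complex.mul_conj, hu1]
    norm_num
  have hsum : (w z₁ - 1) + ((starRingEnd ℂ) (w z₁) - 1)
      = -(((Complex.normSq (w z₁ - 1) : ℝ) : ℂ)) := by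
    rw [← hMdef]
    linear_combination hu1C
  have hfinal : ((p₁ - 1) + ((starRingEnd ℂ) p₁ - 1) + (τ + τ))
      * ((Complex.normSq (w z₁ - 1) : ℝ) : ℂ) = 0 := by
    linear_combination (-(w z₁ - 1)) * hτeq - ((starRingEnd ℂ) (w z₁) - 1) * hτeq2
      - ((p₁ - 1) + ((starRingEnd ℂ) p₁ - 1)) * hMdef + (2 * τ) * hsum
  have hMne : ((Complex.normSq (w z₁ - 1) : ℝ) : ℂ) ≠ 0 := by
    rw [Ne, Complex.ofReal_eq_zero]
    have := Complex.normSq_pos.mpr (sub_ne_zero.mpr hune)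
    linarith
  have hXY : (p₁ - 1) + ((starRingEnd ℂ) p₁ - 1) + (τ + τ) = 0 :=
    (mul_eq_zero.mp hfinal).resolve_right hMne
  have hXYre := congrArg Complex.re hXY
  simp only [Complex.add_re, Complex.sub_re, Complex.conj_re, Complex.one_re,
    Complex.zero_re] at hXYre
  linarith

/-- **Goodman.** If `f` is starlike on the unit disk and `L` is the
branch of `log (f z / z)` vanishing at the origin, then
`|Arg (f z / z)| = |Im (L z)| ≤ 2 arcsin |z| < π` for all `z` in the disk. -/
theorem goodman_arg_bound
    (f L : ℂ → ℂ)
    (hf : DifferentiableOn ℂ f (ball (0 : ℂ) 1))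
    (hf0 : f 0 = 0) (hf'0 : deriv f 0 = 1)
    (hfz : ∀ z ∈ ball (0 : ℂ) 1, z ≠ 0 → f z ≠ 0)
    (hstar : ∀ z ∈ ball (0 : ℂ) 1, z ≠ 0 → 0 < (z * deriv f z / f z).re)
    (hL : DifferentiableOn ℂ L (ball (0 : ℂ) 1))
    (hL0 : L 0 = 0)
    (hLf : ∀ z ∈ ball (0 : ℂ) 1, z ≠ 0 → Complex.exp (L z) = f z / z) :
    ∀ z ∈ ball (0 : ℂ) 1,
      |(L z).im| ≤ 2 * Real.arcsin (‖z‖) ∧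
        2 * Real.arcsin (‖z‖) < Real.pi := by
  have hkey := goodman_key f L hf hfz hstar hL hL0 hLf
  set w : ℂ → ℂ := fun z => 1 - Complex.exp (-(L z) / 2) with hwdef
  have hw0 : w 0 = 0 := by simp [hwdef, hL0]
  have hwd : DifferentiableOn ℂ w (ball (0 : ℂ) 1) :=
    (differentiableOn_const 1).sub ((hL.neg.div_const 2).cexp)
  have hmaps : Set.MapsTo w (ball (0 : ℂ) 1) (ball (0 : ℂ) 1) := fun z hz =>
    mem_ball_zero_iff.mpr (hkey z hz)
  have hSch : ∀ z ∈ ball (0 : ℂ) 1, ‖w z‖ ≤ ‖z‖ := fun z hz =>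
    Complex.norm_le_norm_of_mapsTo_ball hwd (hmaps.mono_right ball_subset_closedBall) hw0 (mem_ball_zero_iff.mp hz)
  -- positivity of real part of exp (-(L z)/2)
  have hEre : ∀ z ∈ ball (0 : ℂ) 1, 0 < (Complex.exp (-(L z) / 2)).re := by
    intro z hz
    have h1 : ‖w z‖ < 1 := hkey z hz
    have h2 : (w z).re ≤ ‖w z‖ := Complex.re_le_norm _
    have h3 : (Complex.exp (-(L z) / 2)).re = 1 - (w z).re := by
      simp [hwdef, Complex.sub_re]
    rw [h3]; linarith
  -- the branch-difference function
  set g : ℂ → ℝ := fun z => (-(L z) / 2).im - Complex.arg (Complex.exp (-(L z) / 2)) with hgdef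
  have hLc : ContinuousOn (fun z => -(L z) / 2) (ball (0 : ℂ) 1) :=
    (hL.continuousOn.neg).div_const 2
  have hEd : DifferentiableOn ℂ (fun z => Complex.exp (-(L z) / 2)) (ball (0 : ℂ) 1) :=
    (hL.neg.div_const 2).cexp
  have hgim : ContinuousOn (fun z => (-(L z) / 2).im) (ball (0 : ℂ) 1) :=
    Complex.continuous_im.comp_continuousOn hLc
  have hgarg : ContinuousOn (fun z => Complex.arg (Complex.exp (-(L z) / 2)))
      (ball (0 : ℂ) 1) := fun z hz =>
    ContinuousAt.comp_continuousWithinAt (g := Complex.arg)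
      (f := fun z => Complex.exp (-(L z) / 2))
      (Complex.continuousAt_arg (Complex.mem_slitPlane_iff.mpr (Or.inl (hEre z hz))))
      (hEd.continuousOn z hz)
  have hg : ContinuousOn g (ball (0 : ℂ) 1) := hgim.sub hgarg
  have hquant : ∀ z ∈ ball (0 : ℂ) 1, ∃ n : ℤ, g z = n * (2 * Real.pi) := by
    intro z hz
    obtain ⟨n, hn⟩ := im_eq_arg_exp_add (-(L z) / 2)
    exact ⟨n, by rw [hgdef]; simp only; linarith [hn]⟩
  have hg0 : g 0 = 0 := by simp [hgdef, hL0]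
  have hprec : IsPreconnected (ball (0 : ℂ) 1) := (convex_ball (0 : ℂ) 1).isPreconnected
  have h0m : (0 : ℂ) ∈ ball (0 : ℂ) 1 := mem_ball_self one_pos
  have hgz : ∀ z ∈ ball (0 : ℂ) 1, g z = 0 := by
    intro z hz
    by_contra hne
    obtain ⟨n, hn⟩ := hquant z hz
    have hπpos := Real.pi_pos
    rcases lt_or_gt_of_ne hne with hneg | hpos
    · -- g z < 0 : find a point with value -π
      have hn1 : (n : ℝ) ≤ -1 := by
        have : n < 0 := by
          by_contra hc
          push_neg at hc
          have : (0 : ℝ) ≤ (n : ℝ) * (2 * Real.pi) := by positivity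
          linarith [hn, hneg]
        have h1 : n ≤ -1 := by omega
        exact_mod_cast h1
      have hsub := hprec.intermediate_value hz h0m hg
      have hmem : -Real.pi ∈ Set.Icc (g z) (g 0) := by
        rw [hg0]
        constructor
        · rw [hn]; nlinarith
        · linarith
      obtain ⟨y, hy, hgy⟩ := hsub hmem
      obtain ⟨k, hk⟩ := hquant y hy
      rw [hgy] at hk
      have hπ := Real.pi_ne_zero
      have h2 : ((2 * k + 1 : ℤ) : ℝ) * Real.pi = 0 := by push_cast; linarith [hk]
      rcases mul_eq_zero.mp h2 with h | h
      · have : (2 * k + 1 : ℤ) = 0 := by exact_mod_cast h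
        omega
      · exact hπ h
    · -- g z > 0 : find a point with value π
      have hn1 : (1 : ℝ) ≤ (n : ℝ) := by
        have : 0 < n := by
          by_contra hc
          push_neg at hc
          have : (n : ℝ) ≤ 0 := by exact_mod_cast hc
          nlinarith [hn, hpos]
        have h1 : 1 ≤ n := by omega
        exact_mod_cast h1
      have hsub := hprec.intermediate_value h0m hz hg
      have hmem : Real.pi ∈ Set.Icc (g 0) (g z) := by
        rw [hg0]
        constructor
        · linarith
        · rw [hn]; nlinarith
      obtain ⟨y, hy, hgy⟩ := hsub hmem
      obtain ⟨k, hk⟩ := hquant y hy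
      rw [hgy] at hk
      have hπ := Real.pi_ne_zero
      have h2 : ((2 * k - 1 : ℤ) : ℝ) * Real.pi = 0 := by push_cast; linarith [hk]
      rcases mul_eq_zero.mp h2 with h | h
      · have : (2 * k - 1 : ℤ) = 0 := by exact_mod_cast h
        omega
      · exact hπ h
  -- conclusion
  intro z hz
  have habs1 : ‖z‖ < 1 := mem_ball_zero_iff.mp hz
  refine ⟨?_, ?_⟩
  · have hgz' := hgz z hz
    have him2 : ((-(L z)) / 2).im = -(L z).im / 2 := by
      rw [show ((2 : ℂ)) = ((2 : ℝ) : ℂ) by norm_num, Complex.div_ofReal_im]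
      simp
    have hLim : (L z).im = -2 * Complex.arg (Complex.exp (-(L z) / 2)) := by
      rw [hgdef] at hgz'
      simp only at hgz'
      rw [him2] at hgz'
      linarith
    have h1 : ‖w z‖ < 1 := hkey z hz
    have h2 : (1 : ℂ) - w z = Complex.exp (-(L z) / 2) := by simp [hwdef]
    have h3 := abs_arg_one_sub_le h1
    rw [h2] at h3
    have h4 : Real.arcsin (‖w z‖) ≤ Real.arcsin (‖z‖) :=
      Real.monotone_arcsin (hSch z hz)
    rw [hLim]
    calc |(-2 : ℝ) * Complex.arg (Complex.exp (-(L z) / 2))|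
        = 2 * |Complex.arg (Complex.exp (-(L z) / 2))| := by
          rw [abs_mul]; norm_num
    _ ≤ 2 * Real.arcsin (‖w z‖) := by linarith
    _ ≤ 2 * Real.arcsin (‖z‖) := by linarith
  · have : Real.arcsin (‖z‖) < Real.pi / 2 :=
      Real.arcsin_lt_pi_div_two.mpr habs1
    linarith
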